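/- Let a₁, a₂ ∈ [0,∞), b₂₁ ∈ (−∞,0], b₁₁, b₂₂ ∈ (0,∞) and y₁, y₂ ∈ [0,∞). Then the function e₂ converges at infinity, namely e₂(t) → a₂/b₂₂ − b₂₁·a₁/(b₁₁·b₂₂) as t → ∞. (This is the subcritical-case behavior of E(Y_t^{(2)}) in Proposition 3.1.) -/

import Mathlib

open MeasureTheory Filter Real

lemma my_int_exp_mul (c t : ℝ) (hc : c ≠ 0) :
    ∫ s in (0:ℝ)..t, Real.exp (c * s) = (Real.exp (c * t) - 1) / c := by
  rw [intervalIntegral.integral_comp_mul_left Real.exp hc]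
  simp [integral_exp, smul_eq_mul]
  field_simp

lemma my_exp_tend (b : ℝ) (hb : 0 < b) :
    Tendsto (fun t : ℝ => Real.exp (-(b * t))) atTop (nhds 0) := by
  have h1 : Tendsto (fun t : ℝ => b * t) atTop atTop :=
    Tendsto.const_mul_atTop hb tendsto_id
  exact Real.tendsto_exp_neg_atTop_nhds_zero.comp h1

lemma my_mul_exp_tend (b : ℝ) (hb : 0 < b) :
    Tendsto (fun t : ℝ => t * Real.exp (-(b * t))) atTop (nhds 0) := by
  have h1 : Tendsto (fun t : ℝ => b * t) atTop atTop :=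
    Tendsto.const_mul_atTop hb tendsto_id
  have h2 := (Real.tendsto_pow_mul_exp_neg_atTop_nhds_zero 1).comp h1
  have h3 : Tendsto (fun t : ℝ => b⁻¹ * ((b * t) ^ 1 * Real.exp (-(b * t))))
      atTop (nhds (b⁻¹ * 0)) := h2.const_mul _
  rw [mul_zero] at h3
  refine h3.congr fun t => ?_
  have hb' : b ≠ 0 := hb.ne'
  field_simp

lemma my_g_tend (b11 b22 : ℝ) (h1 : 0 < b11) (h2 : 0 < b22) :
    Tendsto (fun t => ∫ s in (0:ℝ)..t,
      Real.exp (-b22 * (t - s)) * Real.exp (-b11 * s)) atTop (nhds 0) := by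
  by_cases h : b11 = b22
  · subst h
    have heq : ∀ t : ℝ, (∫ s in (0:ℝ)..t,
        Real.exp (-b11 * (t - s)) * Real.exp (-b11 * s)) = t * Real.exp (-(b11 * t)) := by
      intro t
      have hi : ∀ s : ℝ, Real.exp (-b11 * (t - s)) * Real.exp (-b11 * s)
          = Real.exp (-(b11 * t)) := by
        intro s
        rw [← Real.exp_add]
        ring_nf
      simp_rw [hi]
      simp [mul_comm]
    exact (my_mul_exp_tend b11 h1).congr fun t => (heq t).symm
  · have hc : b22 - b11 ≠ 0 := sub_ne_zero.mpr (Ne.symm h)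
    have heq : ∀ t : ℝ, (∫ s in (0:ℝ)..t,
        Real.exp (-b22 * (t - s)) * Real.exp (-b11 * s))
        = (Real.exp (-(b11 * t)) - Real.exp (-(b22 * t))) / (b22 - b11) := by
      intro t
      have hi : ∀ s : ℝ, Real.exp (-b22 * (t - s)) * Real.exp (-b11 * s)
          = Real.exp (-(b22 * t)) * Real.exp ((b22 - b11) * s) := by
        intro s
        rw [← Real.exp_add, ← Real.exp_add]
        ring_nf
      simp_rw [hi]
      rw [intervalIntegral.integral_const_mul, my_int_exp_mul _ _ hc]
      rw [mul_div_assoc']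
      congr 1
      rw [mul_sub, ← Real.exp_add, mul_one]
      ring_nf
    have hlim : Tendsto (fun t : ℝ =>
        (Real.exp (-(b11 * t)) - Real.exp (-(b22 * t))) / (b22 - b11))
        atTop (nhds 0) := by
      have := ((my_exp_tend b11 h1).sub (my_exp_tend b22 h2)).div_const (b22 - b11)
      simpa using this
    exact hlim.congr fun t => (heq t).symm

theorem doubleHeston_subcritical_mean_Y2
    (a1 a2 b21 b11 b22 y1 y2 : ℝ)
    (ha1 : 0 ≤ a1) (ha2 : 0 ≤ a2) (hb21 : b21 ≤ 0)
    (hb11 : 0 < b11) (hb22 : 0 < b22)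
    (hy1 : 0 ≤ y1) (hy2 : 0 ≤ y2)
    (e1 e2 : ℝ → ℝ)
    (he1 : ∀ t, 0 ≤ t →
      e1 t = y1 * Real.exp (-b11 * t) + a1 * ∫ u in (0:ℝ)..t, Real.exp (-b11 * u))
    (he2 : ∀ t, 0 ≤ t →
      e2 t = y2 * Real.exp (-b22 * t) + a2 * (∫ u in (0:ℝ)..t, Real.exp (-b22 * u))
        - b21 * ∫ s in (0:ℝ)..t, Real.exp (-b22 * (t - s)) * e1 s) :
    Tendsto e2 atTop (nhds (a2 / b22 - b21 * a1 / (b11 * b22))) := by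
  have hb11' : b11 ≠ 0 := hb11.ne'
  have hb22' : b22 ≠ 0 := hb22.ne'
  -- closed form for e1
  have he1' : ∀ s : ℝ, 0 ≤ s →
      e1 s = (y1 - a1 / b11) * Real.exp (-b11 * s) + a1 / b11 := by
    intro s hs
    rw [he1 s hs, my_int_exp_mul _ _ (neg_ne_zero.mpr hb11')]
    rw [div_neg, ← neg_div, neg_sub]
    field_simp
    ring
  -- explicit form of e2
  have key : ∀ t : ℝ, 0 ≤ t → e2 t =
      y2 * Real.exp (-b22 * t) + a2 * ((1 - Real.exp (-b22 * t)) / b22)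
      - b21 * ((y1 - a1 / b11) *
          (∫ s in (0:ℝ)..t, Real.exp (-b22 * (t - s)) * Real.exp (-b11 * s))
          + (a1 / b11) * ((1 - Real.exp (-b22 * t)) / b22)) := by
    intro t ht
    have hI1 : (∫ u in (0:ℝ)..t, Real.exp (-b22 * u))
        = (1 - Real.exp (-b22 * t)) / b22 := by
      rw [my_int_exp_mul _ _ (neg_ne_zero.mpr hb22')]
      rw [div_neg, ← neg_div, neg_sub]
    have hcongr : (∫ s in (0:ℝ)..t, Real.exp (-b22 * (t - s)) * e1 s)
        = ∫ s in (0:ℝ)..t, Real.exp (-b22 * (t - s))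
            * ((y1 - a1 / b11) * Real.exp (-b11 * s) + a1 / b11) := by
      apply intervalIntegral.integral_congr
      intro s hs
      rw [Set.uIcc_of_le ht] at hs
      dsimp only
      rw [he1' s hs.1]
    have hint1 : IntervalIntegrable
        (fun s => Real.exp (-b22 * (t - s)) * ((y1 - a1 / b11) * Real.exp (-b11 * s)))
        MeasureTheory.volume 0 t := by
      apply Continuous.intervalIntegrable
      fun_prop
    have hint2 : IntervalIntegrable (fun s => Real.exp (-b22 * (t - s)) * (a1 / b11))
        MeasureTheory.volume 0 t := by
      apply Continuous.intervalIntegrable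
      fun_prop
    have hsplit : (∫ s in (0:ℝ)..t, Real.exp (-b22 * (t - s))
            * ((y1 - a1 / b11) * Real.exp (-b11 * s) + a1 / b11))
        = (∫ s in (0:ℝ)..t, Real.exp (-b22 * (t - s)) * ((y1 - a1 / b11) * Real.exp (-b11 * s)))
          + ∫ s in (0:ℝ)..t, Real.exp (-b22 * (t - s)) * (a1 / b11) := by
      rw [← intervalIntegral.integral_add hint1 hint2]
      congr 1
      funext s
      ring
    have ht1 : (∫ s in (0:ℝ)..t, Real.exp (-b22 * (t - s))
            * ((y1 - a1 / b11) * Real.exp (-b11 * s)))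
        = (y1 - a1 / b11)
          * ∫ s in (0:ℝ)..t, Real.exp (-b22 * (t - s)) * Real.exp (-b11 * s) := by
      rw [← intervalIntegral.integral_const_mul]
      congr 1
      funext s
      ring
    have ht2 : (∫ s in (0:ℝ)..t, Real.exp (-b22 * (t - s)) * (a1 / b11))
        = (a1 / b11) * ((1 - Real.exp (-b22 * t)) / b22) := by
      have hi : ∀ s : ℝ, Real.exp (-b22 * (t - s)) * (a1 / b11)
          = (a1 / b11) * Real.exp (-(b22 * t)) * Real.exp (b22 * s) := by
        intro s
        rw [mul_comm, mul_assoc, ← Real.exp_add]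
        ring_nf
      simp_rw [hi]
      rw [intervalIntegral.integral_const_mul, my_int_exp_mul _ _ hb22']
      rw [mul_assoc]
      congr 1
      rw [mul_div_assoc']
      congr 1
      rw [mul_sub, ← Real.exp_add, mul_one]
      ring_nf
      rw [Real.exp_zero]
    rw [he2 t ht, hI1, hcongr, hsplit, ht1, ht2]
  -- take limits
  have hE' : Tendsto (fun t : ℝ => Real.exp (-b22 * t)) atTop (nhds 0) := by
    simpa [neg_mul] using my_exp_tend b22 hb22
  have hF : Tendsto (fun t : ℝ =>
      y2 * Real.exp (-b22 * t) + a2 * ((1 - Real.exp (-b22 * t)) / b22)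
      - b21 * ((y1 - a1 / b11) *
          (∫ s in (0:ℝ)..t, Real.exp (-b22 * (t - s)) * Real.exp (-b11 * s))
          + (a1 / b11) * ((1 - Real.exp (-b22 * t)) / b22)))
      atTop (nhds (y2 * 0 + a2 * ((1 - 0) / b22)
        - b21 * ((y1 - a1 / b11) * 0 + (a1 / b11) * ((1 - 0) / b22)))) := by
    apply Tendsto.sub
    · exact (hE'.const_mul y2).add
        (((tendsto_const_nhds.sub hE').div_const b22).const_mul a2)
    · exact (((my_g_tend b11 b22 hb11 hb22).const_mul (y1 - a1 / b11)).add
        (((tendsto_const_nhds.sub hE').div_const b22).const_mul (a1 / b11))).const_mul b21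
  have hval : (y2 * 0 + a2 * ((1 - 0) / b22)
        - b21 * ((y1 - a1 / b11) * 0 + (a1 / b11) * ((1 - 0) / b22)))
      = a2 / b22 - b21 * a1 / (b11 * b22) := by
    field_simp
    ring
  rw [hval] at hF
  apply hF.congr'
  filter_upwards [eventually_ge_atTop (0:ℝ)] with t ht
  exact (key t ht).symm
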